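/- Let V: ℤ_+^d → T_d be an admissible law of reinforcement and v its moment candidate sequence. Then for every n ≥ 0, Σ_{k_1+...+k_d = n} (n!/(k_1!...k_d!)) v_{k_1,...,k_d} = 1. -/

import Mathlib

open Finset

namespace Stmt6Aux

variable {d : ℕ}

/-- occupation vector of the word `s` after `m` steps -/
def occ (s : ℕ → Fin d) (m : ℕ) : Fin d → ℕ :=
  fun i => ((range m).filter (fun l => s l = i)).card

lemma occ_succ (s : ℕ → Fin d) (n : ℕ) :
    occ s (n + 1) = fun i => occ s n i + if i = s n then 1 else 0 := by
  funext i
  simp only [occ, range_add_one, filter_insert]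
  by_cases h : s n = i
  · rw [if_pos h, card_insert_of_notMem (fun hmem => by
      simpa using mem_of_mem_filter _ hmem), if_pos h.symm]
  · rw [if_neg h, if_neg (fun hh => h hh.symm), add_zero]

lemma occ_congr {s t : ℕ → Fin d} (n : ℕ) (h : ∀ l < n, s l = t l) :
    occ s n = occ t n := by
  funext i
  simp only [occ]
  congr 1
  apply filter_congr
  intro l hl
  rw [h l (mem_range.mp hl)]

/-- every vector is the occupation vector of some word -/
lemma exists_word (hd : 0 < d) :
    ∀ (n : ℕ) (j : Fin d → ℕ), ∑ i, j i = n → ∃ s : ℕ → Fin d, occ s n = j := by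
  intro n
  induction n with
  | zero =>
    intro j hj
    refine ⟨fun _ => ⟨0, hd⟩, funext fun i => ?_⟩
    have := (Finset.sum_eq_zero_iff.mp hj) i (mem_univ i)
    simp [occ, this]
  | succ n ih =>
    intro j hj
    have hne : ∃ i, j i ≠ 0 := by
      by_contra h
      push_neg at h
      simp [h] at hj
    obtain ⟨i, hi⟩ := hne
    set j' : Fin d → ℕ := fun m => j m - if m = i then 1 else 0 with hj'
    have hsumj' : ∑ m, j' m = n := by
      have h1 : ∑ m, j' m = j' i + ∑ m ∈ univ \ {i}, j' m :=
        sum_eq_add_sum_sdiff_singleton_of_mem (mem_univ i) j'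
      have h2 : ∑ m, j m = j i + ∑ m ∈ univ \ {i}, j m :=
        sum_eq_add_sum_sdiff_singleton_of_mem (mem_univ i) j
      have h3 : ∑ m ∈ univ \ {i}, j' m = ∑ m ∈ univ \ {i}, j m := by
        apply Finset.sum_congr rfl
        intro m hm
        have : m ≠ i := by simpa using (Finset.mem_sdiff.mp hm).2
        simp [hj', this]
      have h4 : j' i = j i - 1 := by simp [hj']
      omega
    obtain ⟨s, hs⟩ := ih j' hsumj'
    refine ⟨Function.update s n i, ?_⟩
    have hlt : occ (Function.update s n i) n = j' := by
      rw [occ_congr n (fun l hl => (Function.update_of_ne (Nat.ne_of_lt hl) _ _).symm)] at hs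
      exact hs
    rw [occ_succ, hlt]
    funext m
    by_cases hm : m = i
    · subst hm
      simp [hj', Function.update_self]
      omega
    · simp [hj', hm, Function.update_self]


lemma cast_mult (k : Fin d → ℕ) :
    (Nat.multinomial univ k : ℝ) = (Nat.factorial (∑ i, k i) : ℝ) / ∏ i, ((k i).factorial : ℝ) := by
  have hne : (∏ i, ((k i).factorial : ℝ)) ≠ 0 := by
    apply Finset.prod_ne_zero_iff.mpr
    intro i _
    exact_mod_cast (Nat.factorial_ne_zero _)
  rw [eq_div_iff hne, mul_comm]
  have h := Nat.multinomial_spec (univ : Finset (Fin d)) k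
  exact_mod_cast congrArg (Nat.cast : ℕ → ℝ) h

lemma sum_sub_one {k : Fin d → ℕ} {i : Fin d} (h : k i ≠ 0) :
    ∑ m, (k m - if m = i then 1 else 0) = (∑ m, k m) - 1 := by
  have h1 : ∑ m, (k m - if m = i then 1 else 0)
      = (k i - if i = i then 1 else 0) + ∑ m ∈ univ \ {i}, (k m - if m = i then 1 else 0) :=
    sum_eq_add_sum_sdiff_singleton_of_mem (mem_univ i) _
  have h2 : ∑ m, k m = k i + ∑ m ∈ univ \ {i}, k m :=
    sum_eq_add_sum_sdiff_singleton_of_mem (mem_univ i) k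
  have h3 : ∑ m ∈ univ \ {i}, (k m - if m = i then 1 else 0) = ∑ m ∈ univ \ {i}, k m := by
    apply Finset.sum_congr rfl
    intro m hm
    have : m ≠ i := by simpa using (Finset.mem_sdiff.mp hm).2
    simp [this]
  simp only [if_pos rfl, if_true] at h1
  omega

lemma pascal (k : Fin d → ℕ) (n : ℕ) (hk : ∑ i, k i = n + 1) :
    (Nat.multinomial univ k : ℝ) =
    ∑ i ∈ univ.filter (fun i => k i ≠ 0),
      (Nat.multinomial univ (fun m => k m - if m = i then 1 else 0) : ℝ) := by
  have hprodne : (∏ j, ((k j).factorial : ℝ)) ≠ 0 := by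
    apply Finset.prod_ne_zero_iff.mpr
    intro j _
    exact_mod_cast (Nat.factorial_ne_zero _)
  have hterm : ∀ i ∈ univ.filter (fun i => k i ≠ 0),
      (Nat.multinomial univ (fun m => k m - if m = i then 1 else 0) : ℝ)
      = (k i : ℝ) * (Nat.factorial n : ℝ) / ∏ j, ((k j).factorial : ℝ) := by
    intro i hi
    have hki : k i ≠ 0 := (mem_filter.mp hi).2
    have hsum : ∑ m, (k m - if m = i then 1 else 0) = n := by
      rw [sum_sub_one hki, hk]
      omega
    have hprod : (k i : ℝ) * ∏ j, (((k j - if j = i then 1 else 0)).factorial : ℝ)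
        = ∏ j, ((k j).factorial : ℝ) := by
      have h1 : ∏ j, (((k j - if j = i then 1 else 0)).factorial : ℝ)
          = ((k i - 1).factorial : ℝ) * ∏ j ∈ univ \ {i}, (((k j - if j = i then 1 else 0)).factorial : ℝ) := by
        have := prod_eq_mul_prod_sdiff_singleton_of_mem (mem_univ i)
          (fun j => (((k j - if j = i then 1 else 0)).factorial : ℝ))
        simpa using this
      have h2 : ∏ j, ((k j).factorial : ℝ)
          = ((k i).factorial : ℝ) * ∏ j ∈ univ \ {i}, ((k j).factorial : ℝ) :=
        prod_eq_mul_prod_sdiff_singleton_of_mem (mem_univ i) _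
      have h3 : ∏ j ∈ univ \ {i}, (((k j - if j = i then 1 else 0)).factorial : ℝ)
          = ∏ j ∈ univ \ {i}, ((k j).factorial : ℝ) := by
        apply Finset.prod_congr rfl
        intro m hm
        have : m ≠ i := by simpa using (Finset.mem_sdiff.mp hm).2
        simp [this]
      have h4 : (k i : ℝ) * ((k i - 1).factorial : ℝ) = ((k i).factorial : ℝ) := by
        obtain ⟨m, hm⟩ : ∃ m, k i = m + 1 := ⟨k i - 1, by omega⟩
        rw [hm, Nat.factorial_succ]
        push_cast
        ring
      rw [h1, h2, h3, ← mul_assoc, h4]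
    have hne2 : (∏ j, (((k j - if j = i then 1 else 0)).factorial : ℝ)) ≠ 0 := by
      apply Finset.prod_ne_zero_iff.mpr
      intro j _
      exact_mod_cast (Nat.factorial_ne_zero _)
    rw [cast_mult, hsum, div_eq_div_iff hne2 hprodne, ← hprod]
    ring
  rw [Finset.sum_congr rfl hterm]
  rw [← Finset.sum_div, ← Finset.sum_mul]
  have hsumk : ∑ i ∈ univ.filter (fun i => k i ≠ 0), (k i : ℝ) = (n + 1 : ℝ) := by
    rw [← Nat.cast_sum]
    have : ∑ i ∈ univ.filter (fun i => k i ≠ 0), k i = ∑ i, k i := Finset.sum_filter_ne_zero _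
    rw [this, hk]
    push_cast; ring
  rw [hsumk, cast_mult, hk]
  rw [Nat.factorial_succ]
  push_cast
  ring


end Stmt6Aux


/-- For an admissible law of reinforcement `V` with moment candidate
sequence `v`, for every `n`, `∑_{k₁+⋯+k_d = n} (n!/(k₁!⋯k_d!)) v_k = 1`. -/
theorem stmt_6 (d : ℕ) (V : Fin d → (Fin d → ℕ) → ℝ)
    (hVrange : ∀ p, (∀ i, 0 < V i p ∧ V i p ≤ 1) ∧ ∑ i, V i p = 1)
    (hadm : ∀ (p : Fin d → ℕ) (i j : Fin d),
      V i p * V j (fun k => p k + if k = i then 1 else 0) =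
      V j p * V i (fun k => p k + if k = j then 1 else 0))
    (v : (Fin d → ℕ) → ℝ)
    (hv : ∀ (n : ℕ) (s : ℕ → Fin d),
      v (fun i => ((range n).filter (fun l => s l = i)).card) =
      ∏ m ∈ range n, V (s m) (fun i => ((range m).filter (fun l => s l = i)).card)) :
    ∀ n : ℕ,
      ∑ k ∈ (Fintype.piFinset fun _ : Fin d => range (n + 1)).filter
          (fun k => ∑ i, k i = n),
        (Nat.multinomial univ k : ℝ) * v k = 1 := by
  classical
  rcases Nat.eq_zero_or_pos d with hd0 | hd
  · exfalso
    have h := (hVrange (fun _ => 0)).2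
    subst hd0
    simpa using h
  have hv' : ∀ (n : ℕ) (s : ℕ → Fin d),
      v (Stmt6Aux.occ s n) = ∏ m ∈ range n, V (s m) (Stmt6Aux.occ s m) := hv
  set S : ℕ → Finset (Fin d → ℕ) := fun n =>
    (Fintype.piFinset fun _ : Fin d => range (n + 1)).filter (fun k => ∑ i, k i = n) with hS
  have memS : ∀ (n : ℕ) (k : Fin d → ℕ), k ∈ S n ↔ ∑ i, k i = n := by
    intro n k
    simp only [hS, mem_filter, Fintype.mem_piFinset, mem_range]
    constructor
    · exact fun h => h.2
    · intro h
      refine ⟨fun i => ?_, h⟩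
      have : k i ≤ ∑ i, k i := Finset.single_le_sum (fun _ _ => Nat.zero_le _) (mem_univ i)
      omega
  -- key recurrence : v (j + eᵢ) = v j * V i j
  have key : ∀ (j : Fin d → ℕ) (i : Fin d),
      v (fun m => j m + if m = i then 1 else 0) = v j * V i j := by
    intro j i
    obtain ⟨s, hs⟩ := Stmt6Aux.exists_word hd (∑ m, j m) j rfl
    set n := ∑ m, j m with hn
    set s' : ℕ → Fin d := Function.update s n i with hs'
    have hocc : Stmt6Aux.occ s' n = j := by
      rw [Stmt6Aux.occ_congr n (fun l hl => Function.update_of_ne (Nat.ne_of_lt hl) _ _)]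
      exact hs
    have hsn : s' n = i := Function.update_self _ _ _
    have h1 := hv' (n + 1) s'
    rw [Finset.prod_range_succ, ← hv' n s', Stmt6Aux.occ_succ, hocc, hsn] at h1
    exact h1
  -- the inner fiber sum of multinomials
  intro n
  induction n with
  | zero =>
    have hS0 : S 0 = {fun _ => 0} := by
      ext k
      rw [memS, mem_singleton]
      constructor
      · intro h
        funext i
        exact (Finset.sum_eq_zero_iff.mp h) i (mem_univ i)
      · intro h; subst h; simp
    show ∑ k ∈ S 0, (Nat.multinomial univ k : ℝ) * v k = 1
    rw [hS0, sum_singleton]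
    have hv0 : v (fun _ => 0) = 1 := by
      have h := hv 0 (fun _ => ⟨0, hd⟩)
      simpa using h
    rw [hv0]
    simp [Nat.multinomial]
  | succ n ih =>
    show ∑ k ∈ S (n + 1), (Nat.multinomial univ k : ℝ) * v k = 1
    have ih' : ∑ k ∈ S n, (Nat.multinomial univ k : ℝ) * v k = 1 := ih
    set g : (Fin d → ℕ) × Fin d → (Fin d → ℕ) :=
      fun p => fun m => p.1 m + if m = p.2 then 1 else 0 with hg
    have hmaps : ∀ p ∈ S n ×ˢ (univ : Finset (Fin d)), g p ∈ S (n + 1) := by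
      intro p hp
      rw [memS]
      have h1 : ∑ i, p.1 i = n := (memS n p.1).mp (Finset.mem_product.mp hp).1
      rw [hg]
      simp only []
      rw [Finset.sum_add_distrib, h1, Finset.sum_ite_eq' univ p.2 (fun _ => 1)]
      simp
    have hfib : ∀ k ∈ S (n + 1),
        ∑ p ∈ (S n ×ˢ (univ : Finset (Fin d))).filter (fun p => g p = k),
          ((Nat.multinomial univ p.1 : ℝ) * v p.1 * V p.2 p.1)
        = (Nat.multinomial univ k : ℝ) * v k := by
      intro k hk
      have hkn : ∑ i, k i = n + 1 := (memS _ _).mp hk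
      have hterm : ∀ p ∈ (S n ×ˢ (univ : Finset (Fin d))).filter (fun p => g p = k),
          (Nat.multinomial univ p.1 : ℝ) * v p.1 * V p.2 p.1
          = (Nat.multinomial univ p.1 : ℝ) * v k := by
        intro p hp
        have hgp : g p = k := (mem_filter.mp hp).2
        rw [mul_assoc, ← key p.1 p.2]
        rw [show (fun m => p.1 m + if m = p.2 then 1 else 0) = k from hgp]
      rw [Finset.sum_congr rfl hterm, ← Finset.sum_mul]
      have hcount : ∑ p ∈ (S n ×ˢ (univ : Finset (Fin d))).filter (fun p => g p = k),
          (Nat.multinomial univ p.1 : ℝ)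
          = ∑ i ∈ univ.filter (fun i => k i ≠ 0),
            (Nat.multinomial univ (fun m => k m - if m = i then 1 else 0) : ℝ) := by
        apply Finset.sum_nbij' (fun p => p.2)
          (fun i => (fun m => k m - if m = i then 1 else 0, i))
        · intro p hp
          have hgp : g p = k := (mem_filter.mp hp).2
          have := congrFun hgp p.2
          simp [hg] at this
          simp only [mem_filter, mem_univ, true_and]
          omega
        · intro i hi
          have hki : k i ≠ 0 := (mem_filter.mp hi).2
          rw [mem_filter]
          constructor
          · rw [Finset.mem_product]
            refine ⟨?_, mem_univ i⟩
            rw [memS, Stmt6Aux.sum_sub_one hki, hkn]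
            omega
          · show g _ = k
            funext m
            rcases eq_or_ne m i with hm | hm
            · subst hm
              show k m - (if m = m then 1 else 0) + (if m = m then 1 else 0) = k m
              rw [if_pos rfl]
              omega
            · show k m - (if m = i then 1 else 0) + (if m = i then 1 else 0) = k m
              rw [if_neg hm]
              omega
        · intro p hp
          have hgp : g p = k := (mem_filter.mp hp).2
          have hp1 : (fun m => k m - if m = p.2 then 1 else 0) = p.1 := by
            funext m
            have := congrFun hgp m
            simp only [hg] at this
            by_cases hm : m = p.2 <;> simp [hm] at this ⊢ <;> omega
          exact Prod.ext hp1 rfl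
        · intro i hi
          rfl
        · intro p hp
          have hgp : g p = k := (mem_filter.mp hp).2
          have hp1 : (fun m => k m - if m = p.2 then 1 else 0) = p.1 := by
            funext m
            have := congrFun hgp m
            simp only [hg] at this
            by_cases hm : m = p.2 <;> simp [hm] at this ⊢ <;> omega
          rw [hp1]
      rw [hcount, ← Stmt6Aux.pascal k n hkn]
    calc ∑ k ∈ S (n + 1), (Nat.multinomial univ k : ℝ) * v k
        = ∑ k ∈ S (n + 1), ∑ p ∈ (S n ×ˢ (univ : Finset (Fin d))).filter (fun p => g p = k),
            ((Nat.multinomial univ p.1 : ℝ) * v p.1 * V p.2 p.1) :=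
          (Finset.sum_congr rfl (fun k hk => (hfib k hk).symm))
      _ = ∑ p ∈ S n ×ˢ (univ : Finset (Fin d)),
            ((Nat.multinomial univ p.1 : ℝ) * v p.1 * V p.2 p.1) :=
          Finset.sum_fiberwise_of_maps_to hmaps _
      _ = ∑ j ∈ S n, ∑ i : Fin d, ((Nat.multinomial univ j : ℝ) * v j * V i j) := by
          rw [Finset.sum_product]
      _ = ∑ j ∈ S n, (Nat.multinomial univ j : ℝ) * v j := by
          apply Finset.sum_congr rfl
          intro j _
          rw [← Finset.mul_sum, (hVrange j).2, mul_one]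
      _ = 1 := ih'
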